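/- Let f : ℕ → (0,∞) be an eventually non-increasing function with Σ_{n≥1} f(n) = ∞ such that liminf_{n→∞} (Σ_{i∈[1,n]} f(i))/(Σ_{i∈[1,kn]} f(i)) ≠ 0 for all k ∈ ℕ, and suppose the Erdős–Ulam ideal E_f := {S ⊆ ℕ : (Σ_{i∈S∩[1,n]} f(i))/(Σ_{i∈[1,n]} f(i)) → 0 as n → ∞} is strechable. Then E_f is a thinnable ideal. -/

import Mathlib

open Filter Topology MeasureTheory Set

/-- The canonical (increasing) enumeration of a set of natural numbers. -/
noncomputable def enumOf (A : Set ℕ) : ℕ → ℕ := Nat.nth (· ∈ A)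

/-- `idxSet A B` is the set `A_B = {a_b : b ∈ B}`, where `{a_n}` is the canonical
enumeration of `A`. -/
noncomputable def idxSet (A B : Set ℕ) : Set ℕ := enumOf A '' B

/-- `seqLE X Y` means `X ≤ Y`, i.e. `x_n ≤ y_n` for all `n`, for the canonical
enumerations `{x_n}` of `X` and `{y_n}` of `Y`. -/
def seqLE (X Y : Set ℕ) : Prop := ∀ n, enumOf X n ≤ enumOf Y n

/-- `A` has asymptotic density `c`: `|A ∩ [1,n]| / n → c`. -/
def HasDensity (A : Set ℕ) (c : ℝ) : Prop :=
  Tendsto (fun n : ℕ => ((A ∩ Set.Icc 1 n).ncard : ℝ) / n) atTop (𝓝 c)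

/-- An ideal on ℕ: closed under finite unions and subsets, contains all finite sets,
and is not the whole power set. -/
def IsIdeal (I : Set (Set ℕ)) : Prop :=
  (∀ A B : Set ℕ, A ∈ I → B ∈ I → A ∪ B ∈ I) ∧
  (∀ A B : Set ℕ, A ⊆ B → B ∈ I → A ∈ I) ∧
  (∀ A : Set ℕ, A.Finite → A ∈ I) ∧
  Set.univ ∉ I

/-- `I` is weakly thinnable: `A_B ∉ I` whenever `A` admits non-zero asymptotic density
and `B ∉ I`. -/
def WeaklyThinnable (I : Set (Set ℕ)) : Prop :=
  ∀ A B : Set ℕ, (∃ c : ℝ, c ≠ 0 ∧ HasDensity A c) → B ∉ I → idxSet A B ∉ I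

/-- `I` is thinnable: weakly thinnable, `B_A ∉ I` whenever `A` admits non-zero asymptotic
density and `B ∉ I`, and `X ∉ I` whenever `X ≤ Y` and `Y ∉ I`. -/
def Thinnable (I : Set (Set ℕ)) : Prop :=
  WeaklyThinnable I ∧
  (∀ A B : Set ℕ, (∃ c : ℝ, c ≠ 0 ∧ HasDensity A c) → B ∉ I → idxSet B A ∉ I) ∧
  (∀ X Y : Set ℕ, X.Infinite → Y.Infinite → seqLE X Y → Y ∉ I → X ∉ I)

/-- `I` is strechable: `kA ∉ I` for all (positive) `k` and all `A ∉ I`. -/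
def Strechable (I : Set (Set ℕ)) : Prop :=
  ∀ k : ℕ, 0 < k → ∀ A : Set ℕ, A ∉ I → (fun a => k * a) '' A ∉ I

/-- `∑_{i ∈ S ∩ [1,n]} f i`. -/
noncomputable def wSum (f : ℕ → ℝ) (S : Set ℕ) (n : ℕ) : ℝ :=
  ∑ i ∈ Finset.Icc 1 n, S.indicator f i

/-- The Erdős–Ulam ideal `E_f`. -/
def erdosUlamIdeal (f : ℕ → ℝ) : Set (Set ℕ) :=
  {S | Tendsto (fun n : ℕ => wSum f S n / wSum f Set.univ n) atTop (𝓝 0)}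

open Filter Topology Set

section basic
variable {f : ℕ → ℝ}

lemma wSum_nonneg (hpos : ∀ n, 0 < f n) (S : Set ℕ) (n : ℕ) : 0 ≤ wSum f S n :=
  Finset.sum_nonneg fun i _ => Set.indicator_nonneg (fun j _ => (hpos j).le) i

lemma wSum_mono (hpos : ∀ n, 0 < f n) {S T : Set ℕ} (h : S ⊆ T) (n : ℕ) :
    wSum f S n ≤ wSum f T n :=
  Finset.sum_le_sum fun i _ =>
    Set.indicator_le_indicator_of_subset h (fun j => (hpos j).le) i

lemma sum_range_succ_eq_aux (g : ℕ → ℝ) (n : ℕ) :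
    ∑ i ∈ Finset.range (n+1), g i = g 0 + ∑ i ∈ Finset.Icc 1 n, g i := by
  rw [Finset.range_eq_Ico, Finset.sum_eq_sum_Ico_succ_bot (Nat.succ_pos n), Nat.succ_eq_add_one,
    Finset.Ico_add_one_right_eq_Icc]

lemma wSum_univ_eq (n : ℕ) : wSum f Set.univ n = ∑ i ∈ Finset.Icc 1 n, f i := by
  simp [wSum]

lemma wSum_univ_pos (hpos : ∀ n, 0 < f n) {n : ℕ} (hn : 1 ≤ n) : 0 < wSum f Set.univ n := by
  rw [wSum_univ_eq]
  exact Finset.sum_pos (fun i _ => hpos i) ⟨1, Finset.mem_Icc.2 ⟨le_rfl, hn⟩⟩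

lemma wSum_univ_atTop (hpos : ∀ n, 0 < f n) (hdiv : ¬ Summable f) :
    Tendsto (fun n => wSum f Set.univ n) atTop atTop := by
  have h0 := (not_summable_iff_tendsto_nat_atTop_of_nonneg (fun i => (hpos i).le)).1 hdiv
  have h1 : Tendsto (fun n : ℕ => (∑ i ∈ Finset.range (n+1), f i) - f 0) atTop atTop :=
    (h0.comp (tendsto_add_atTop_nat 1)).atTop_add tendsto_const_nhds
  refine h1.congr fun n => ?_
  rw [sum_range_succ_eq_aux, wSum_univ_eq]; ring

end basic
attribute [local instance] Classical.propDecidable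

section conv
variable {f : ℕ → ℝ}

lemma sum_indicator_range_eq {Y : Set ℕ} (hY : Y.Infinite) (n : ℕ) :
    ∑ i ∈ Finset.range n, Y.indicator f i
      = ∑ j ∈ Finset.range (Nat.count (· ∈ Y) n), f (Nat.nth (· ∈ Y) j) := by
  classical
  have hp : (setOf (· ∈ Y)).Infinite := hY
  have himg : Finset.image (Nat.nth (· ∈ Y)) (Finset.range (Nat.count (· ∈ Y) n))
      = (Finset.range n).filter (· ∈ Y) := by
    ext x
    simp only [Finset.mem_image, Finset.mem_filter, Finset.mem_range]
    constructor
    · rintro ⟨j, hj, rfl⟩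
      exact ⟨Nat.nth_lt_of_lt_count hj, Nat.nth_mem_of_infinite hp j⟩
    · rintro ⟨hx, hxY⟩
      exact ⟨Nat.count (· ∈ Y) x, (Nat.lt_nth_iff_count_lt hp).2 (by rwa [Nat.nth_count hxY]),
        Nat.nth_count hxY⟩
  rw [Finset.sum_indicator_eq_sum_filter, ← himg,
    Finset.sum_image (fun a _ b _ h => Nat.nth_injective hp h)]

lemma wSum_eq_sum_enum {Y : Set ℕ} (hY : Y.Infinite) (n : ℕ) :
    wSum f Y n
      = ∑ j ∈ Finset.range (Nat.count (· ∈ Y) (n+1)), f (enumOf Y j) - Y.indicator f 0 := by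
  have h := sum_indicator_range_eq (f := f) hY (n+1)
  rw [sum_range_succ_eq_aux (Y.indicator f) n] at h
  unfold wSum enumOf
  linarith

/-- Master squeeze lemma. -/
lemma notMem_of_wSum_le (hpos : ∀ n, 0 < f n) (hdiv : ¬ Summable f) {X Y : Set ℕ} {k C : ℝ}
    (h : ∀ n : ℕ, 1 ≤ n → wSum f Y n ≤ k * wSum f X n + C)
    (hY : Y ∉ erdosUlamIdeal f) : X ∉ erdosUlamIdeal f := by
  intro hX
  apply hY
  have hF := wSum_univ_atTop hpos hdiv
  have h1 : Tendsto (fun n : ℕ => k * (wSum f X n / wSum f Set.univ n)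
      + C / wSum f Set.univ n) atTop (𝓝 0) := by
    have := (hX.const_mul k).add ((tendsto_const_nhds (x := C)).div_atTop hF)
    simpa using this
  refine tendsto_of_tendsto_of_tendsto_of_le_of_le' tendsto_const_nhds h1 ?_ ?_
  · exact Eventually.of_forall fun n =>
      div_nonneg (wSum_nonneg hpos Y n) (wSum_nonneg hpos Set.univ n)
  · filter_upwards [eventually_ge_atTop 1] with n hn
    have hFn := wSum_univ_pos hpos hn
    rw [div_le_iff₀ hFn]
    have := h n hn
    calc wSum f Y n ≤ k * wSum f X n + C := this
    _ = (k * (wSum f X n / wSum f Set.univ n) + C / wSum f Set.univ n) * wSum f Set.univ n := by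
        field_simp
  
end conv
section ideal
variable {f : ℕ → ℝ}

lemma wSum_ratio_nonneg (hpos : ∀ n, 0 < f n) (S : Set ℕ) :
    ∀ᶠ n : ℕ in Filter.atTop, 0 ≤ wSum f S n / wSum f Set.univ n :=
  Filter.Eventually.of_forall fun n =>
    div_nonneg (wSum_nonneg hpos S n) (wSum_nonneg hpos Set.univ n)

lemma finite_mem_EU (hpos : ∀ n, 0 < f n) (hdiv : ¬ Summable f) {A : Set ℕ}
    (hA : A.Finite) : A ∈ erdosUlamIdeal f := by
  classical
  have hb : ∀ n, wSum f A n ≤ ∑ i ∈ hA.toFinset, f i := by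
    intro n
    rw [wSum, Finset.sum_indicator_eq_sum_filter]
    refine Finset.sum_le_sum_of_subset_of_nonneg ?_ (fun i _ _ => (hpos i).le)
    intro i hi
    simp only [Finset.mem_filter] at hi
    simpa using hi.2
  have hF := wSum_univ_atTop hpos hdiv
  refine tendsto_of_tendsto_of_tendsto_of_le_of_le' tendsto_const_nhds
    ((tendsto_const_nhds (x := ∑ i ∈ hA.toFinset, f i)).div_atTop hF)
    (wSum_ratio_nonneg hpos A) ?_
  filter_upwards [eventually_ge_atTop 1] with n hn
  exact div_le_div_of_nonneg_right (hb n) (wSum_univ_pos hpos hn).le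

lemma infinite_of_notMem_EU (hpos : ∀ n, 0 < f n) (hdiv : ¬ Summable f) {A : Set ℕ}
    (hA : A ∉ erdosUlamIdeal f) : A.Infinite := by
  by_contra h
  exact hA (finite_mem_EU hpos hdiv (Set.not_infinite.mp h))

lemma subset_mem_EU (hpos : ∀ n, 0 < f n) {A B : Set ℕ} (hAB : A ⊆ B)
    (hB : B ∈ erdosUlamIdeal f) : A ∈ erdosUlamIdeal f := by
  refine tendsto_of_tendsto_of_tendsto_of_le_of_le' tendsto_const_nhds hB
    (wSum_ratio_nonneg hpos A) ?_
  refine Filter.Eventually.of_forall fun n => ?_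
  rcases Nat.eq_zero_or_pos n with rfl | hn
  · simp [wSum]
  · exact div_le_div_of_nonneg_right (wSum_mono hpos hAB n) (wSum_univ_pos hpos hn).le

lemma union_mem_EU (hpos : ∀ n, 0 < f n) {A B : Set ℕ}
    (hA : A ∈ erdosUlamIdeal f) (hB : B ∈ erdosUlamIdeal f) :
    A ∪ B ∈ erdosUlamIdeal f := by
  have key : ∀ n, wSum f (A ∪ B) n ≤ wSum f A n + wSum f B n := by
    intro n
    rw [wSum, wSum, wSum, ← Finset.sum_add_distrib]
    refine Finset.sum_le_sum fun i _ => ?_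
    by_cases hiA : i ∈ A
    · rw [Set.indicator_of_mem (Set.mem_union_left _ hiA), Set.indicator_of_mem hiA]
      have : 0 ≤ B.indicator f i := Set.indicator_nonneg (fun j _ => (hpos j).le) i
      linarith
    · by_cases hiB : i ∈ B
      · rw [Set.indicator_of_mem (Set.mem_union_right _ hiB), Set.indicator_of_mem hiB,
          Set.indicator_of_notMem hiA]
        simp
      · rw [Set.indicator_of_notMem hiA, Set.indicator_of_notMem hiB,
          Set.indicator_of_notMem (by simp [hiA, hiB])]
        simp
  have h0 : Filter.Tendsto (fun n : ℕ => wSum f A n / wSum f Set.univ n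
      + wSum f B n / wSum f Set.univ n) Filter.atTop (nhds 0) := by
    simpa using hA.add hB
  refine tendsto_of_tendsto_of_tendsto_of_le_of_le' tendsto_const_nhds h0
    (wSum_ratio_nonneg hpos _) ?_
  refine Filter.Eventually.of_forall fun n => ?_
  rw [← add_div]
  rcases Nat.eq_zero_or_pos n with rfl | hn
  · simp [wSum]
  · exact div_le_div_of_nonneg_right (key n) (wSum_univ_pos hpos hn).le

lemma univ_notMem_EU (hpos : ∀ n, 0 < f n) : Set.univ ∉ erdosUlamIdeal f := by
  intro h
  have h1 : Filter.Tendsto (fun _ : ℕ => (1 : ℝ)) Filter.atTop (nhds 0) := by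
    refine h.congr' ?_
    filter_upwards [Filter.eventually_ge_atTop 1] with n hn
    exact (div_self (wSum_univ_pos hpos hn).ne').symm ▸ rfl
  exact one_ne_zero (tendsto_nhds_unique (tendsto_const_nhds (x := (1:ℝ)) (f := Filter.atTop (α := ℕ))) h1)

lemma isIdeal_EU (hpos : ∀ n, 0 < f n) (hdiv : ¬ Summable f) :
    IsIdeal (erdosUlamIdeal f) :=
  ⟨fun _ _ hA hB => union_mem_EU hpos hA hB,
   fun _ _ h hB => subset_mem_EU hpos h hB,
   fun _ h => finite_mem_EU hpos hdiv h,
   univ_notMem_EU hpos⟩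

end ideal
section enum

lemma setOf_mem_eq (A : Set ℕ) : {x | x ∈ A} = A := rfl

lemma enumOf_strictMono {A : Set ℕ} (hA : A.Infinite) : StrictMono (enumOf A) :=
  Nat.nth_strictMono hA

lemma enumOf_range_of_strictMono {g : ℕ → ℕ} (hg : StrictMono g) :
    enumOf (Set.range g) = g := by
  have hinf : (Set.range g).Infinite := Set.infinite_range_of_injective hg.injective
  exact (StrictMono.range_inj (Nat.nth_strictMono hinf) hg).1
    (Nat.range_nth_of_infinite hinf)

lemma range_enumOf {A : Set ℕ} (hA : A.Infinite) : Set.range (enumOf A) = A :=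
  Nat.range_nth_of_infinite hA

lemma idxSet_infinite {A B : Set ℕ} (hA : A.Infinite) (hB : B.Infinite) :
    (idxSet A B).Infinite :=
  hB.image (Set.injOn_of_injective (Nat.nth_injective hA))

lemma enumOf_idxSet {A B : Set ℕ} (hA : A.Infinite) (hB : B.Infinite) :
    enumOf (idxSet A B) = enumOf A ∘ enumOf B := by
  have h1 : idxSet A B = Set.range (enumOf A ∘ enumOf B) := by
    rw [Set.range_comp, range_enumOf hB]; rfl
  rw [h1]
  exact enumOf_range_of_strictMono ((enumOf_strictMono hA).comp (enumOf_strictMono hB))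

lemma le_enumOf {A : Set ℕ} (hA : A.Infinite) (n : ℕ) : n ≤ enumOf A n :=
  (enumOf_strictMono hA).le_apply

end enum
section comparison
variable {f : ℕ → ℝ}

lemma wSum_le_of_enum_le (hpos : ∀ n, 0 < f n)
    (hmono : ∃ N : ℕ, ∀ m n : ℕ, N ≤ m → m ≤ n → f n ≤ f m)
    {X Y : Set ℕ} (hX : X.Infinite) (hY : Y.Infinite)
    {N₀ : ℕ} (hle : ∀ j, N₀ ≤ j → enumOf X j ≤ enumOf Y j) :
    ∃ C : ℝ, ∀ n : ℕ, 1 ≤ n → wSum f Y n ≤ 1 * wSum f X n + C := by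
  obtain ⟨N₁, hN₁⟩ := hmono
  set M := max N₀ N₁ with hM
  refine ⟨(∑ j ∈ Finset.range M, f (enumOf Y j)) + f 0, fun n hn => ?_⟩
  set m := Nat.count (· ∈ Y) (n+1) with hm
  have h0 : wSum f Y n ≤ ∑ j ∈ Finset.range m, f (enumOf Y j) := by
    rw [wSum_eq_sum_enum hY n]
    have : 0 ≤ Y.indicator f 0 := Set.indicator_nonneg (fun j _ => (hpos j).le) 0
    linarith
  have hsplit := (Finset.sum_filter_add_sum_filter_not (Finset.range m) (· < M)
      (fun j => f (enumOf Y j)))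
  have h1 : ∑ j ∈ (Finset.range m).filter (· < M), f (enumOf Y j)
      ≤ ∑ j ∈ Finset.range M, f (enumOf Y j) := by
    refine Finset.sum_le_sum_of_subset_of_nonneg ?_ (fun i _ _ => (hpos _).le)
    intro j hj
    simp only [Finset.mem_filter, Finset.mem_range] at hj ⊢
    exact hj.2
  have h2 : ∑ j ∈ (Finset.range m).filter (fun j => ¬ j < M), f (enumOf Y j)
      ≤ ∑ j ∈ Finset.range (Nat.count (· ∈ X) (n+1)), f (enumOf X j) := by
    have hsub : (Finset.range m).filter (fun j => ¬ j < M)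
        ⊆ Finset.range (Nat.count (· ∈ X) (n+1)) := by
      intro j hj
      simp only [Finset.mem_filter, Finset.mem_range, not_lt] at hj
      obtain ⟨hjm, hjM⟩ := hj
      have hxy : enumOf X j ≤ enumOf Y j := hle j (le_trans (le_max_left _ _) hjM)
      have hyn : enumOf Y j < n + 1 := Nat.nth_lt_of_lt_count hjm
      rw [Finset.mem_range]
      exact (Nat.lt_nth_iff_count_lt (p := (· ∈ X)) hX).2 (lt_of_le_of_lt hxy hyn)
    calc ∑ j ∈ (Finset.range m).filter (fun j => ¬ j < M), f (enumOf Y j)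
        ≤ ∑ j ∈ (Finset.range m).filter (fun j => ¬ j < M), f (enumOf X j) := by
          refine Finset.sum_le_sum fun j hj => ?_
          simp only [Finset.mem_filter, not_lt] at hj
          have hjM := hj.2
          have hx : N₁ ≤ enumOf X j :=
            le_trans (le_trans (le_max_right _ _) hjM) (le_enumOf hX j)
          exact hN₁ _ _ hx (hle j (le_trans (le_max_left _ _) hjM))
      _ ≤ ∑ j ∈ Finset.range (Nat.count (· ∈ X) (n+1)), f (enumOf X j) :=
          Finset.sum_le_sum_of_subset_of_nonneg hsub (fun i _ _ => (hpos _).le)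
  have hXsum := wSum_eq_sum_enum (f := f) hX n
  have hind : X.indicator f 0 ≤ f 0 :=
    Set.indicator_le_self' (fun j _ => (hpos j).le) 0
  linarith

lemma sum_div_group (g : ℕ → ℝ) {k : ℕ} (hk : 0 < k) (Q : ℕ) :
    ∑ j ∈ Finset.range (k * Q), g (j / k) = (k : ℝ) * ∑ q ∈ Finset.range Q, g q := by
  induction Q with
  | zero => simp
  | succ Q ih =>
    have h1 : k * Q ≤ k * (Q + 1) := Nat.mul_le_mul_left _ (Nat.le_succ Q)
    have h2 : ∑ j ∈ Finset.Ico (k * Q) (k * (Q + 1)), g (j / k) = (k : ℝ) * g Q := by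
      have hconst : ∀ j ∈ Finset.Ico (k * Q) (k * (Q + 1)), g (j / k) = g Q := by
        intro j hj
        rw [Finset.mem_Ico] at hj
        have : j / k = Q :=
          Nat.div_eq_of_lt_le (by rw [mul_comm]; exact hj.1)
            (by rw [mul_comm]; exact hj.2)
        rw [this]
      rw [Finset.sum_congr rfl hconst, Finset.sum_const, Nat.card_Ico, nsmul_eq_mul]
      congr 1
      have : k * (Q + 1) - k * Q = k := by
        rw [Nat.mul_succ]; omega
      rw [this]
    rw [Finset.sum_range_succ, Finset.range_eq_Ico,
      ← Finset.sum_Ico_consecutive _ (Nat.zero_le (k * Q)) h1, ← Finset.range_eq_Ico, ih, h2]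
    ring

lemma wSum_le_skip (hpos : ∀ n, 0 < f n)
    (hmono : ∃ N : ℕ, ∀ m n : ℕ, N ≤ m → m ≤ n → f n ≤ f m)
    {B : Set ℕ} (hB : B.Infinite) {k : ℕ} (hk : 0 < k) :
    ∃ C : ℝ, ∀ n : ℕ, 1 ≤ n →
      wSum f B n ≤ (k : ℝ) * wSum f (idxSet B (Set.range (fun i => k * i))) n + C := by
  obtain ⟨N₁, hN₁⟩ := hmono
  have hKmono : StrictMono (fun i => k * i) := fun a b h => mul_lt_mul_of_pos_left h hk
  have hK : (Set.range (fun i => k * i)).Infinite :=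
    Set.infinite_range_of_injective hKmono.injective
  set B' := idxSet B (Set.range (fun i => k * i)) with hB'def
  have hB' : B'.Infinite := idxSet_infinite hB hK
  have henum : ∀ j, enumOf B' j = enumOf B (k * j) := by
    intro j
    rw [hB'def, enumOf_idxSet hB hK, Function.comp_apply, enumOf_range_of_strictMono hKmono]
  set M := k * (N₁ + 1) with hMdef
  set D : ℝ := f (enumOf B M) + ∑ j ∈ Finset.range M, f (enumOf B j) with hDdef
  have hDsum : ∀ q, f (enumOf B (k * q)) ≤ D := by
    intro q
    rcases lt_or_ge (k * q) M with h | h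
    · have h1 : f (enumOf B (k * q)) ≤ ∑ j ∈ Finset.range M, f (enumOf B j) :=
        Finset.single_le_sum (fun i _ => (hpos _).le) (Finset.mem_range.2 h)
      have := (hpos (enumOf B M)).le
      rw [hDdef]; linarith
    · have h1 : N₁ ≤ enumOf B M := by
        refine le_trans ?_ (le_enumOf hB M)
        calc N₁ ≤ N₁ + 1 := Nat.le_succ _
        _ ≤ k * (N₁ + 1) := Nat.le_mul_of_pos_left _ hk
      have h2 : enumOf B M ≤ enumOf B (k * q) := (enumOf_strictMono hB).monotone h
      have h3 := hN₁ _ _ h1 h2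
      have h4 : (0:ℝ) ≤ ∑ j ∈ Finset.range M, f (enumOf B j) :=
        Finset.sum_nonneg fun i _ => (hpos _).le
      rw [hDdef]; linarith
  refine ⟨(∑ j ∈ Finset.range M, f (enumOf B j)) + (k : ℝ) * (f 0 + D), fun n hn => ?_⟩
  set m := Nat.count (· ∈ B) (n+1) with hm
  have h0 : wSum f B n ≤ ∑ j ∈ Finset.range m, f (enumOf B j) := by
    rw [wSum_eq_sum_enum hB n]
    have : 0 ≤ B.indicator f 0 := Set.indicator_nonneg (fun j _ => (hpos j).le) 0
    linarith
  have hsplit := Finset.sum_filter_add_sum_filter_not (Finset.range m) (· < M)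
      (fun j => f (enumOf B j))
  have h1 : ∑ j ∈ (Finset.range m).filter (· < M), f (enumOf B j)
      ≤ ∑ j ∈ Finset.range M, f (enumOf B j) := by
    refine Finset.sum_le_sum_of_subset_of_nonneg ?_ (fun i _ _ => (hpos _).le)
    intro j hj
    simp only [Finset.mem_filter, Finset.mem_range] at hj ⊢
    exact hj.2
  -- termwise: for M ≤ j, f (b_j) ≤ f (b_{k * (j / k)})
  have h2 : ∑ j ∈ (Finset.range m).filter (fun j => ¬ j < M), f (enumOf B j)
      ≤ ∑ j ∈ (Finset.range m).filter (fun j => ¬ j < M), f (enumOf B (k * (j / k))) := by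
    refine Finset.sum_le_sum fun j hj => ?_
    simp only [Finset.mem_filter, not_lt] at hj
    have hjM := hj.2
    have hdiv1 : N₁ + 1 ≤ j / k := by
      rw [Nat.le_div_iff_mul_le hk, mul_comm]
      exact hjM
    have hN : N₁ ≤ enumOf B (k * (j / k)) := by
      refine le_trans ?_ (le_enumOf hB _)
      calc N₁ ≤ N₁ + 1 := Nat.le_succ _
      _ ≤ j / k := hdiv1
      _ ≤ k * (j / k) := Nat.le_mul_of_pos_left _ hk
    have hle2 : enumOf B (k * (j / k)) ≤ enumOf B j :=
      (enumOf_strictMono hB).monotone (by rw [mul_comm]; exact Nat.div_mul_le_self j k)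
    exact hN₁ _ _ hN hle2
  have h3 : ∑ j ∈ (Finset.range m).filter (fun j => ¬ j < M), f (enumOf B (k * (j / k)))
      ≤ ∑ j ∈ Finset.range (k * (m / k + 1)), f (enumOf B (k * (j / k))) := by
    refine Finset.sum_le_sum_of_subset_of_nonneg ?_ (fun i _ _ => (hpos _).le)
    intro j hj
    simp only [Finset.mem_filter, Finset.mem_range] at hj ⊢
    have hmlt : m < k * (m / k + 1) := by
      have hd := Nat.div_add_mod m k
      have hmod := Nat.mod_lt m hk
      calc m = k * (m / k) + m % k := hd.symm
      _ < k * (m / k) + k := by omega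
      _ = k * (m / k + 1) := by rw [Nat.mul_succ]
    exact lt_trans hj.1 hmlt
  have h4 : ∑ j ∈ Finset.range (k * (m / k + 1)), f (enumOf B (k * (j / k)))
      = (k : ℝ) * ∑ q ∈ Finset.range (m / k + 1), f (enumOf B (k * q)) :=
    sum_div_group (fun q => f (enumOf B (k * q))) hk (m / k + 1)
  have h5 : ∑ q ∈ Finset.range (m / k + 1), f (enumOf B (k * q))
      ≤ wSum f B' n + f 0 + D := by
    rw [Finset.sum_range_succ]
    have hlast := hDsum (m / k)
    have hmain : ∑ q ∈ Finset.range (m / k), f (enumOf B (k * q))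
        ≤ wSum f B' n + f 0 := by
      have hsub : Finset.range (m / k) ⊆ Finset.range (Nat.count (· ∈ B') (n+1)) := by
        intro q hq
        rw [Finset.mem_range] at hq ⊢
        have hkq : k * q < m := by
          calc k * q < k * (m / k) := mul_lt_mul_of_pos_left hq hk
          _ ≤ m := by rw [mul_comm]; exact Nat.div_mul_le_self m k
        have hlt : enumOf B' q < n + 1 := by
          rw [henum q]
          exact Nat.nth_lt_of_lt_count hkq
        exact (Nat.lt_nth_iff_count_lt (p := (· ∈ B')) hB').2 hlt
      have hstep : ∑ q ∈ Finset.range (m / k), f (enumOf B (k * q))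
          ≤ ∑ q ∈ Finset.range (Nat.count (· ∈ B') (n+1)), f (enumOf B' q) := by
        rw [show (∑ q ∈ Finset.range (m / k), f (enumOf B (k * q)))
            = ∑ q ∈ Finset.range (m / k), f (enumOf B' q) from
          Finset.sum_congr rfl (fun q _ => by rw [henum q])]
        exact Finset.sum_le_sum_of_subset_of_nonneg hsub (fun i _ _ => (hpos _).le)
      have hconv := wSum_eq_sum_enum (f := f) hB' n
      have hind : B'.indicator f 0 ≤ f 0 :=
        Set.indicator_le_self' (fun j _ => (hpos j).le) 0
      linarith
    linarith
  have hw : 0 ≤ wSum f B' n := wSum_nonneg hpos B' n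
  have hkpos : (0:ℝ) < (k:ℝ) := by exact_mod_cast hk
  nlinarith [h0, hsplit, h1, h2, h3, h4, h5]

end comparison
section density

lemma density_pos {A : Set ℕ} {c : ℝ} (hc : c ≠ 0) (hd : HasDensity A c) : 0 < c := by
  have h0 : 0 ≤ c := by
    refine ge_of_tendsto hd ?_
    exact Filter.Eventually.of_forall fun n =>
      div_nonneg (Nat.cast_nonneg _) (Nat.cast_nonneg _)
  exact lt_of_le_of_ne h0 (Ne.symm hc)

lemma density_infinite {A : Set ℕ} {c : ℝ} (hc : c ≠ 0) (hd : HasDensity A c) :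
    A.Infinite := by
  rw [Set.infinite_coe_iff.symm] at *
  by_contra hinf
  have hfin : A.Finite := Set.not_infinite.mp (by rwa [Set.infinite_coe_iff] at hinf)
  have h0 : Filter.Tendsto (fun n : ℕ => ((A ∩ Set.Icc 1 n).ncard : ℝ) / n)
      Filter.atTop (nhds 0) := by
    refine tendsto_of_tendsto_of_tendsto_of_le_of_le' tendsto_const_nhds
      (tendsto_const_div_atTop_nhds_zero_nat (A.ncard : ℝ)) ?_ ?_
    · exact Filter.Eventually.of_forall fun n =>
        div_nonneg (Nat.cast_nonneg _) (Nat.cast_nonneg _)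
    · refine Filter.Eventually.of_forall fun n => ?_
      have h1 : (A ∩ Set.Icc 1 n).ncard ≤ A.ncard :=
        Set.ncard_le_ncard Set.inter_subset_left hfin
      exact div_le_div_of_nonneg_right (by exact_mod_cast h1) (Nat.cast_nonneg n)
  exact hc (tendsto_nhds_unique hd h0)

lemma density_linear_bound {A : Set ℕ} {c : ℝ} (hc : c ≠ 0) (hd : HasDensity A c) :
    ∃ k : ℕ, 0 < k ∧ ∃ M : ℕ, ∀ j, M ≤ j → enumOf A j ≤ k * j := by
  have hcpos := density_pos hc hd
  have hA := density_infinite hc hd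
  have hmon := enumOf_strictMono hA
  have htop : Filter.Tendsto (fun j => enumOf A j) Filter.atTop Filter.atTop :=
    hmon.tendsto_atTop
  have hcomp : Filter.Tendsto
      (fun j : ℕ => ((A ∩ Set.Icc 1 (enumOf A j)).ncard : ℝ) / (enumOf A j))
      Filter.atTop (nhds c) := hd.comp htop
  have hbound : ∀ j : ℕ, ((A ∩ Set.Icc 1 (enumOf A j)).ncard : ℝ) ≤ (j : ℝ) + 1 := by
    intro j
    have hsub : A ∩ Set.Icc 1 (enumOf A j) ⊆ enumOf A '' Set.Iic j := by
      rintro x ⟨hxA, _, hxle⟩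
      have hx : x ∈ Set.range (enumOf A) := by rw [range_enumOf hA]; exact hxA
      obtain ⟨i, rfl⟩ := hx
      exact ⟨i, Set.mem_Iic.2 ((hmon.le_iff_le).1 hxle), rfl⟩
    have h1 : (A ∩ Set.Icc 1 (enumOf A j)).ncard ≤ (enumOf A '' Set.Iic j).ncard :=
      Set.ncard_le_ncard hsub ((Set.finite_Iic j).image _)
    have h2 : (enumOf A '' Set.Iic j).ncard ≤ (Set.Iic j).ncard :=
      Set.ncard_image_le (Set.finite_Iic j)
    have h3 : (Set.Iic j).ncard = j + 1 := by
      rw [← Finset.coe_Iic, Set.ncard_coe_finset, Nat.card_Iic]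
    have : (A ∩ Set.Icc 1 (enumOf A j)).ncard ≤ j + 1 := by omega
    exact_mod_cast this
  have hev : ∀ᶠ j : ℕ in Filter.atTop,
      c / 2 < ((A ∩ Set.Icc 1 (enumOf A j)).ncard : ℝ) / (enumOf A j) :=
    hcomp.eventually (eventually_gt_nhds (by linarith))
  obtain ⟨M₀, hM₀⟩ := Filter.eventually_atTop.1 hev
  set K : ℕ := max 1 ⌈4 / c⌉₊ with hKdef
  refine ⟨K, lt_of_lt_of_le one_pos (le_max_left _ _), max M₀ 1, fun j hj => ?_⟩
  have hjM : M₀ ≤ j := le_trans (le_max_left _ _) hj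
  have hj1 : 1 ≤ j := le_trans (le_max_right _ _) hj
  have hajpos : 0 < enumOf A j := lt_of_lt_of_le hj1 (le_enumOf hA j)
  have hajposR : (0:ℝ) < (enumOf A j : ℝ) := by exact_mod_cast hajpos
  have h := hM₀ j hjM
  have hlt : c / 2 < ((j : ℝ) + 1) / (enumOf A j) :=
    lt_of_lt_of_le h (div_le_div_of_nonneg_right (hbound j) (Nat.cast_nonneg _))
  have hmul : c * (enumOf A j : ℝ) < ((j:ℝ) + 1) * 2 := by
    rw [div_lt_div_iff₀ two_pos hajposR] at hlt
    exact hlt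
  have hK4 : 4 / c ≤ (K : ℝ) := by
    refine le_trans (Nat.le_ceil _) ?_
    exact_mod_cast Nat.le_max_right 1 ⌈4 / c⌉₊
  have hcK : 4 ≤ c * K := by
    rw [div_le_iff₀ hcpos] at hK4
    linarith
  have hjR : (1:ℝ) ≤ (j:ℝ) := by exact_mod_cast hj1
  have hfinal : (enumOf A j : ℝ) ≤ (K : ℝ) * (j : ℝ) := by
    nlinarith [mul_nonneg (sub_nonneg.2 hcK) (le_trans zero_le_one hjR)]
  have : (enumOf A j : ℝ) ≤ ((K * j : ℕ) : ℝ) := by push_cast; linarith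
  exact_mod_cast this

end density

/-- If `f : ℕ → (0,∞)` is eventually non-increasing with `∑ f n = ∞`, satisfies
`liminf_n (∑_{i ≤ n} f i)/(∑_{i ≤ kn} f i) ≠ 0` for all `k`, and the Erdős–Ulam ideal
`E_f` is strechable, then `E_f` is a thinnable ideal. -/
theorem stmt1 (f : ℕ → ℝ) (hpos : ∀ n, 0 < f n)
    (hmono : ∃ N : ℕ, ∀ m n : ℕ, N ≤ m → m ≤ n → f n ≤ f m)
    (hdiv : ¬ Summable f)
    (hliminf : ∀ k : ℕ, 0 < k →
      liminf (fun n : ℕ => wSum f Set.univ n / wSum f Set.univ (k * n)) atTop ≠ 0)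
    (hstr : Strechable (erdosUlamIdeal f)) :
    IsIdeal (erdosUlamIdeal f) ∧ Thinnable (erdosUlamIdeal f) := by
  refine ⟨isIdeal_EU hpos hdiv, ?_, ?_, ?_⟩
  · -- weakly thinnable
    rintro A B ⟨c, hc, hd⟩ hB
    have hA := density_infinite hc hd
    obtain ⟨k, hk, M, hM⟩ := density_linear_bound hc hd
    have hBinf := infinite_of_notMem_EU hpos hdiv hB
    have hkB : (fun a => k * a) '' B ∉ erdosUlamIdeal f := hstr k hk B hB
    have hKmono : StrictMono (fun a : ℕ => k * a) := fun a b h => mul_lt_mul_of_pos_left h hk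
    have hkBinf : ((fun a => k * a) '' B).Infinite :=
      hBinf.image (Set.injOn_of_injective hKmono.injective)
    have henumkB : enumOf ((fun a => k * a) '' B) = fun j => k * enumOf B j := by
      have h1 : (fun a => k * a) '' B = Set.range ((fun a => k * a) ∘ enumOf B) := by
        rw [Set.range_comp, range_enumOf hBinf]
      rw [h1, enumOf_range_of_strictMono (hKmono.comp (enumOf_strictMono hBinf))]
      rfl
    have hXinf : (idxSet A B).Infinite := idxSet_infinite hA hBinf
    have hle : ∀ j, M ≤ j →
        enumOf (idxSet A B) j ≤ enumOf ((fun a => k * a) '' B) j := by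
      intro j hj
      rw [enumOf_idxSet hA hBinf, henumkB]
      exact hM (enumOf B j) (le_trans hj (le_enumOf hBinf j))
    obtain ⟨C, hC⟩ := wSum_le_of_enum_le hpos hmono hXinf hkBinf hle
    exact notMem_of_wSum_le hpos hdiv hC hkB
  · -- B_A
    rintro A B ⟨c, hc, hd⟩ hB
    have hA := density_infinite hc hd
    obtain ⟨k, hk, M, hM⟩ := density_linear_bound hc hd
    have hBinf := infinite_of_notMem_EU hpos hdiv hB
    obtain ⟨C, hC⟩ := wSum_le_skip hpos hmono hBinf hk
    have hB' : idxSet B (Set.range fun i => k * i) ∉ erdosUlamIdeal f :=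
      notMem_of_wSum_le hpos hdiv hC hB
    have hKmono : StrictMono (fun i : ℕ => k * i) := fun a b h => mul_lt_mul_of_pos_left h hk
    have hK : (Set.range fun i : ℕ => k * i).Infinite :=
      Set.infinite_range_of_injective hKmono.injective
    have hB'inf : (idxSet B (Set.range fun i => k * i)).Infinite := idxSet_infinite hBinf hK
    have hXinf : (idxSet B A).Infinite := idxSet_infinite hBinf hA
    have hle : ∀ j, M ≤ j →
        enumOf (idxSet B A) j ≤ enumOf (idxSet B (Set.range fun i => k * i)) j := by
      intro j hj
      rw [enumOf_idxSet hBinf hA, enumOf_idxSet hBinf hK, Function.comp_apply,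
        Function.comp_apply, enumOf_range_of_strictMono hKmono]
      exact (enumOf_strictMono hBinf).monotone (hM j hj)
    obtain ⟨C₂, hC₂⟩ := wSum_le_of_enum_le hpos hmono hXinf hB'inf hle
    exact notMem_of_wSum_le hpos hdiv hC₂ hB'
  · -- seqLE
    intro X Y hX hY hle hYn
    obtain ⟨C, hC⟩ := wSum_le_of_enum_le hpos hmono hX hY (N₀ := 0) (fun j _ => hle j)
    exact notMem_of_wSum_le hpos hdiv hC hYn
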